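/- If (x₁,y₁) and (x₂,y₂) lie on the Edwards curve x² + y² = 1 + d x²y², and 1 + d x₁x₂y₁y₂ ≠ 0 and 1 - d x₁x₂y₁y₂ ≠ 0, then the point ((x₁y₂ + y₁x₂)/(1 + d x₁x₂y₁y₂), (y₁y₂ - x₁x₂)/(1 - d x₁x₂y₁y₂)) also lies on the curve. -/

import Mathlib

/-- The Edwards addition law produces a point on the Edwards curve. -/
theorem edwards_addition_closed {F : Type*} [Field F] (d x₁ y₁ x₂ y₂ : F)
    (h₁ : x₁ ^ 2 + y₁ ^ 2 = 1 + d * x₁ ^ 2 * y₁ ^ 2)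
    (h₂ : x₂ ^ 2 + y₂ ^ 2 = 1 + d * x₂ ^ 2 * y₂ ^ 2)
    (hp : 1 + d * x₁ * x₂ * y₁ * y₂ ≠ 0)
    (hm : 1 - d * x₁ * x₂ * y₁ * y₂ ≠ 0) :
    ((x₁ * y₂ + y₁ * x₂) / (1 + d * x₁ * x₂ * y₁ * y₂)) ^ 2 +
      ((y₁ * y₂ - x₁ * x₂) / (1 - d * x₁ * x₂ * y₁ * y₂)) ^ 2 =
    1 + d * ((x₁ * y₂ + y₁ * x₂) / (1 + d * x₁ * x₂ * y₁ * y₂)) ^ 2 *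
      ((y₁ * y₂ - x₁ * x₂) / (1 - d * x₁ * x₂ * y₁ * y₂)) ^ 2 := by
  have key :
      (x₁ * y₂ + y₁ * x₂) ^ 2 * (1 - d * x₁ * x₂ * y₁ * y₂) ^ 2 +
        (y₁ * y₂ - x₁ * x₂) ^ 2 * (1 + d * x₁ * x₂ * y₁ * y₂) ^ 2 =
      (1 + d * x₁ * x₂ * y₁ * y₂) ^ 2 * (1 - d * x₁ * x₂ * y₁ * y₂) ^ 2 +
        d * (x₁ * y₂ + y₁ * x₂) ^ 2 * (y₁ * y₂ - x₁ * x₂) ^ 2 := by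
    linear_combination
      (((1 + (d * x₁ * x₂ * y₁ * y₂) ^ 2) * (x₂ ^ 2 + y₂ ^ 2) -
          d * x₂ ^ 2 * y₂ ^ 2 * (x₁ ^ 2 + y₁ ^ 2 + 1 + d * x₁ ^ 2 * y₁ ^ 2)) * h₁ +
       ((1 + (d * x₁ * x₂ * y₁ * y₂) ^ 2) * (1 + d * x₁ ^ 2 * y₁ ^ 2) -
          d * x₁ ^ 2 * y₁ ^ 2 * (x₂ ^ 2 + y₂ ^ 2 + 1 + d * x₂ ^ 2 * y₂ ^ 2)) * h₂)
  have hp' : 1 + x₁ * y₂ * y₁ * x₂ * d ≠ 0 := fun h => hp (by linear_combination h)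
  have hm' : 1 - x₁ * y₂ * y₁ * x₂ * d ≠ 0 := fun h => hm (by linear_combination h)
  field_simp
  linear_combination key
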